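/- The function Φ is even: for every real t, Φ(−t) = Φ(t). -/

import Mathlib

/-- Polya's function `Φ(t) = ∑_{n≥1} (4π²n⁴e^{9t/2} − 6πn²e^{5t/2}) e^{−πn²e^{2t}}`. -/
noncomputable def Phi (t : ℝ) : ℝ :=
  ∑' n : ℕ,
    (4 * Real.pi ^ 2 * ((n : ℝ) + 1) ^ 4 * Real.exp (9 * t / 2)
      - 6 * Real.pi * ((n : ℝ) + 1) ^ 2 * Real.exp (5 * t / 2))
    * Real.exp (-Real.pi * ((n : ℝ) + 1) ^ 2 * Real.exp (2 * t))

open Real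

namespace PhiAux

/-- The basic Gaussian term. -/
noncomputable def cc (t : ℝ) (n : ℤ) : ℝ := exp (-π * exp (2 * t) * (n : ℝ) ^ 2)

/-- Theta function. -/
noncomputable def G0 (t : ℝ) : ℝ := ∑' n : ℤ, cc t n

/-- First derivative of theta. -/
noncomputable def G1 (t : ℝ) : ℝ := ∑' n : ℤ, (-2 * π * (n : ℝ) ^ 2 * exp (2 * t)) * cc t n

/-- Second derivative of theta. -/
noncomputable def G2 (t : ℝ) : ℝ :=
  ∑' n : ℤ, (4 * π ^ 2 * (n : ℝ) ^ 4 * exp (2 * t) ^ 2 - 4 * π * (n : ℝ) ^ 2 * exp (2 * t))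
    * cc t n

lemma mul_exp_le (u : ℝ) (hu : 0 ≤ u) : u * exp (-u) ≤ 2 * exp (-(u / 2)) := by
  have h : u ≤ 2 * exp (u / 2) := by nlinarith [Real.add_one_le_exp (u / 2)]
  have h2 : u * exp (-u) ≤ (2 * exp (u / 2)) * exp (-u) :=
    mul_le_mul_of_nonneg_right h (exp_nonneg _)
  calc u * exp (-u) ≤ 2 * exp (u / 2) * exp (-u) := h2
    _ = 2 * exp (-(u / 2)) := by rw [mul_assoc, ← Real.exp_add]; congr 2; ring

lemma sq_mul_exp_le (u : ℝ) (hu : 0 ≤ u) : u ^ 2 * exp (-u) ≤ 16 * exp (-(u / 2)) := by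
  have h : u ≤ 4 * exp (u / 4) := by nlinarith [Real.add_one_le_exp (u / 4)]
  have h2 : u ^ 2 ≤ 16 * exp (u / 2) := by
    have h3 := Real.exp_nonneg (u / 4)
    have hsq : exp (u / 4) * exp (u / 4) = exp (u / 2) := by rw [← Real.exp_add]; congr 1; ring
    nlinarith
  have h4 : u ^ 2 * exp (-u) ≤ (16 * exp (u / 2)) * exp (-u) :=
    mul_le_mul_of_nonneg_right h2 (exp_nonneg _)
  calc u ^ 2 * exp (-u) ≤ 16 * exp (u / 2) * exp (-u) := h4
    _ = 16 * exp (-(u / 2)) := by rw [mul_assoc, ← Real.exp_add]; congr 2; ring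

lemma coef1_le (u : ℝ) (hu : 0 ≤ u) : |(-2 * u) * exp (-u)| ≤ 4 * exp (-(u / 2)) := by
  rw [abs_mul, abs_of_nonpos (by linarith : -2 * u ≤ 0), abs_of_nonneg (exp_nonneg _)]
  have := mul_exp_le u hu
  nlinarith [exp_nonneg (-u)]

lemma coef2_le (u : ℝ) (hu : 0 ≤ u) : |(4 * u ^ 2 - 4 * u) * exp (-u)| ≤ 72 * exp (-(u / 2)) := by
  rw [abs_mul, abs_of_nonneg (exp_nonneg _)]
  have habs : |4 * u ^ 2 - 4 * u| ≤ 4 * u ^ 2 + 4 * u := by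
    rw [abs_sub_le_iff]; constructor <;> nlinarith [sq_nonneg u]
  have e1 := sq_mul_exp_le u hu
  have e2 := mul_exp_le u hu
  nlinarith [exp_nonneg (-u), exp_nonneg (-(u / 2))]

lemma sum_exp {b : ℝ} (hb : 0 < b) : Summable (fun n : ℤ => exp (-b * (n : ℝ) ^ 2)) := by
  have hnat : Summable (fun n : ℕ => exp (-b * (n : ℝ))) := by
    simpa using summable_pow_mul_exp_neg_nat_mul 0 hb
  apply Summable.of_nat_of_neg <;>
  · refine Summable.of_nonneg_of_le (fun n => exp_nonneg _) (fun n => ?_) hnat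
    push_cast
    apply Real.exp_le_exp.2
    have hn : (n : ℝ) ≤ (n : ℝ) ^ 2 := by
      exact_mod_cast Nat.cast_le.2 (Nat.le_self_pow two_ne_zero n)
    nlinarith

lemma bound1 {b : ℝ} (hb : 0 < b) {y : ℝ} (hy : b ≤ exp (2 * y)) (n : ℤ) :
    ‖(-2 * π * (n : ℝ) ^ 2 * exp (2 * y)) * cc y n‖ ≤ 4 * exp (-(π * b / 2) * (n : ℝ) ^ 2) := by
  have hu0 : (0:ℝ) ≤ π * exp (2 * y) * (n : ℝ) ^ 2 := by positivity
  have h1 : (-2 * π * (n : ℝ) ^ 2 * exp (2 * y)) * cc y n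
      = (-2 * (π * exp (2 * y) * (n : ℝ) ^ 2)) * exp (-(π * exp (2 * y) * (n : ℝ) ^ 2)) := by
    rw [cc, show -π * exp (2 * y) * (n : ℝ) ^ 2 = -(π * exp (2 * y) * (n : ℝ) ^ 2) by ring]
    ring
  rw [Real.norm_eq_abs, h1]
  refine (coef1_le _ hu0).trans ?_
  have h3 : exp (-(π * exp (2 * y) * (n : ℝ) ^ 2 / 2)) ≤ exp (-(π * b / 2) * (n : ℝ) ^ 2) := by
    apply Real.exp_le_exp.2
    nlinarith [pi_pos, sq_nonneg (n : ℝ)]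
  linarith

lemma bound2 {b : ℝ} (hb : 0 < b) {y : ℝ} (hy : b ≤ exp (2 * y)) (n : ℤ) :
    ‖(4 * π ^ 2 * (n : ℝ) ^ 4 * exp (2 * y) ^ 2 - 4 * π * (n : ℝ) ^ 2 * exp (2 * y)) * cc y n‖
      ≤ 72 * exp (-(π * b / 2) * (n : ℝ) ^ 2) := by
  have hu0 : (0:ℝ) ≤ π * exp (2 * y) * (n : ℝ) ^ 2 := by positivity
  have h1 : (4 * π ^ 2 * (n : ℝ) ^ 4 * exp (2 * y) ^ 2 - 4 * π * (n : ℝ) ^ 2 * exp (2 * y))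
        * cc y n
      = (4 * (π * exp (2 * y) * (n : ℝ) ^ 2) ^ 2 - 4 * (π * exp (2 * y) * (n : ℝ) ^ 2))
        * exp (-(π * exp (2 * y) * (n : ℝ) ^ 2)) := by
    rw [cc, show -π * exp (2 * y) * (n : ℝ) ^ 2 = -(π * exp (2 * y) * (n : ℝ) ^ 2) by ring]
    ring
  rw [Real.norm_eq_abs, h1]
  refine (coef2_le _ hu0).trans ?_
  have h3 : exp (-(π * exp (2 * y) * (n : ℝ) ^ 2 / 2)) ≤ exp (-(π * b / 2) * (n : ℝ) ^ 2) := by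
    apply Real.exp_le_exp.2
    nlinarith [pi_pos, sq_nonneg (n : ℝ)]
  linarith



lemma sum_cc (t : ℝ) : Summable (fun n : ℤ => cc t n) := by
  have hb : (0:ℝ) < π * exp (2 * t) := by positivity
  refine (sum_exp hb).congr fun n => ?_
  rw [cc]
  congr 1
  ring

lemma sum_cc1 (t : ℝ) :
    Summable (fun n : ℤ => (-2 * π * (n : ℝ) ^ 2 * exp (2 * t)) * cc t n) := by
  have hb : (0:ℝ) < π * exp (2 * t) / 2 := by positivity
  exact Summable.of_norm_bounded ((sum_exp hb).mul_left 4)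
    (fun n => bound1 (exp_pos (2 * t)) le_rfl n)

lemma sum_cc2 (t : ℝ) :
    Summable (fun n : ℤ =>
      (4 * π ^ 2 * (n : ℝ) ^ 4 * exp (2 * t) ^ 2 - 4 * π * (n : ℝ) ^ 2 * exp (2 * t))
        * cc t n) := by
  have hb : (0:ℝ) < π * exp (2 * t) / 2 := by positivity
  exact Summable.of_norm_bounded ((sum_exp hb).mul_left 72)
    (fun n => bound2 (exp_pos (2 * t)) le_rfl n)

lemma hd1 (n : ℤ) (t : ℝ) :
    HasDerivAt (fun s => cc s n) ((-2 * π * (n : ℝ) ^ 2 * exp (2 * t)) * cc t n) t := by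
  have he : HasDerivAt (fun s : ℝ => exp (2 * s)) (exp (2 * t) * (2 * 1)) t :=
    ((hasDerivAt_id t).const_mul (2:ℝ)).exp
  have hin : HasDerivAt (fun s : ℝ => -π * exp (2 * s) * (n : ℝ) ^ 2)
      ((-π * (exp (2 * t) * (2 * 1))) * (n : ℝ) ^ 2) t :=
    (he.const_mul (-π)).mul_const ((n : ℝ) ^ 2)
  have := hin.exp
  simp only [cc]
  convert this using 1
  ring

lemma hd2 (n : ℤ) (t : ℝ) :
    HasDerivAt (fun s => (-2 * π * (n : ℝ) ^ 2 * exp (2 * s)) * cc s n)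
      ((4 * π ^ 2 * (n : ℝ) ^ 4 * exp (2 * t) ^ 2 - 4 * π * (n : ℝ) ^ 2 * exp (2 * t))
        * cc t n) t := by
  have he : HasDerivAt (fun s : ℝ => exp (2 * s)) (exp (2 * t) * (2 * 1)) t :=
    ((hasDerivAt_id t).const_mul (2:ℝ)).exp
  have ha : HasDerivAt (fun s : ℝ => -2 * π * (n : ℝ) ^ 2 * exp (2 * s))
      (-2 * π * (n : ℝ) ^ 2 * (exp (2 * t) * (2 * 1))) t := by
    have := he.const_mul (-2 * π * (n : ℝ) ^ 2)
    convert this using 2 <;> ring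
  have : HasDerivAt (fun s => (-2 * π * (n : ℝ) ^ 2 * exp (2 * s)) * cc s n)
      (-2 * π * (n : ℝ) ^ 2 * (exp (2 * t) * (2 * 1)) * cc t n +
        -2 * π * (n : ℝ) ^ 2 * exp (2 * t) * (-2 * π * (n : ℝ) ^ 2 * exp (2 * t) * cc t n)) t :=
    ha.mul (hd1 n t)
  convert this using 1
  ring

lemma hG0 (t : ℝ) : HasDerivAt G0 (G1 t) t := by
  have hb : (0:ℝ) < exp (2 * (t - 1)) := exp_pos _
  have hsum : Summable (fun n : ℤ => 4 * exp (-(π * exp (2 * (t - 1)) / 2) * (n : ℝ) ^ 2)) :=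
    (sum_exp (by positivity)).mul_left 4
  simp only [G0, G1]
  refine hasDerivAt_tsum_of_isPreconnected hsum (isOpen_Ioi (a := t - 1))
    isPreconnected_Ioi (fun n y _ => hd1 n y) (fun n y hy => ?_)
    (y₀ := t) (by simp : t ∈ Set.Ioi (t - 1)) (sum_cc t) (by simp : t ∈ Set.Ioi (t - 1))
  exact bound1 hb (exp_le_exp.2 (by simp at hy; linarith)) n

lemma hG1 (t : ℝ) : HasDerivAt G1 (G2 t) t := by
  have hb : (0:ℝ) < exp (2 * (t - 1)) := exp_pos _
  have hsum : Summable (fun n : ℤ => 72 * exp (-(π * exp (2 * (t - 1)) / 2) * (n : ℝ) ^ 2)) :=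
    (sum_exp (by positivity)).mul_left 72
  simp only [G1, G2]
  refine hasDerivAt_tsum_of_isPreconnected hsum (isOpen_Ioi (a := t - 1))
    isPreconnected_Ioi (fun n y _ => hd2 n y) (fun n y hy => ?_)
    (y₀ := t) (by simp : t ∈ Set.Ioi (t - 1)) (sum_cc1 t) (by simp : t ∈ Set.Ioi (t - 1))
  exact bound2 hb (exp_le_exp.2 (by simp at hy; linarith)) n

lemma E0 (t : ℝ) : G0 (-t) = exp t * G0 t := by
  have ha : (0:ℝ) < exp (2 * (-t)) := exp_pos _
  have key := Real.tsum_exp_neg_mul_int_sq ha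
  have h1 : (exp (2 * (-t))) ^ ((1:ℝ) / 2) = exp (-t) := by
    rw [Real.rpow_def_of_pos (exp_pos _), Real.log_exp]
    congr 1
    ring
  have h2 : ∀ n : ℤ, -π / exp (2 * (-t)) * (n : ℝ) ^ 2 = -π * exp (2 * t) * (n : ℝ) ^ 2 := by
    intro n
    rw [show (2:ℝ) * (-t) = -(2 * t) by ring, Real.exp_neg, div_eq_mul_inv, inv_inv]
  have h3 : ∑' n : ℤ, exp (-π / exp (2 * (-t)) * (n : ℝ) ^ 2)
      = ∑' n : ℤ, exp (-π * exp (2 * t) * (n : ℝ) ^ 2) := tsum_congr fun n => by rw [h2 n]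
  simp only [G0, cc]
  rw [key, h1, h3, one_div, Real.exp_neg, inv_inv]

lemma E1 (t : ℝ) : G1 (-t) = -(exp t * (G0 t + G1 t)) := by
  have hL : HasDerivAt (fun s : ℝ => G0 (-s)) (G1 (-t) * (-1)) t :=
    HasDerivAt.comp t (hG0 (-t)) (hasDerivAt_neg t)
  have hR : HasDerivAt (fun s : ℝ => exp s * G0 s) (exp t * G0 t + exp t * G1 t) t :=
    (Real.hasDerivAt_exp t).mul (hG0 t)
  have hfun : (fun s : ℝ => G0 (-s)) = (fun s : ℝ => exp s * G0 s) := funext fun s => E0 s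
  rw [hfun] at hL
  have := hL.unique hR
  linarith

lemma E2 (t : ℝ) : G2 (-t) = exp t * (G0 t + 2 * G1 t + G2 t) := by
  have hL : HasDerivAt (fun s : ℝ => G1 (-s)) (G2 (-t) * (-1)) t :=
    HasDerivAt.comp t (hG1 (-t)) (hasDerivAt_neg t)
  have hR : HasDerivAt (fun s : ℝ => -(exp s * (G0 s + G1 s)))
      (-(exp t * (G0 t + G1 t) + exp t * (G1 t + G2 t))) t :=
    ((Real.hasDerivAt_exp t).mul ((hG0 t).add (hG1 t))).neg
  have hfun : (fun s : ℝ => G1 (-s)) = (fun s : ℝ => -(exp s * (G0 s + G1 s))) :=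
    funext fun s => E1 s
  rw [hfun] at hL
  have := hL.unique hR
  linarith

end PhiAux



namespace PhiAux

/-- The summand of `Phi`, extended to `ℤ`. -/
noncomputable def f (t : ℝ) (n : ℤ) : ℝ :=
  (4 * π ^ 2 * (n : ℝ) ^ 4 * exp (9 * t / 2) - 6 * π * (n : ℝ) ^ 2 * exp (5 * t / 2))
    * exp (-π * (n : ℝ) ^ 2 * exp (2 * t))

lemma f_eq (t : ℝ) (n : ℤ) :
    f t n = exp (t / 2) * ((-2 * π * (n : ℝ) ^ 2 * exp (2 * t)) * cc t n
      + (4 * π ^ 2 * (n : ℝ) ^ 4 * exp (2 * t) ^ 2 - 4 * π * (n : ℝ) ^ 2 * exp (2 * t))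
        * cc t n) := by
  have e1 : exp (9 * t / 2) = exp (t / 2) * exp (2 * t) ^ 2 := by
    rw [sq, ← Real.exp_add, ← Real.exp_add]; congr 1; ring
  have e2 : exp (5 * t / 2) = exp (t / 2) * exp (2 * t) := by
    rw [← Real.exp_add]; congr 1; ring
  have e3 : exp (-π * (n : ℝ) ^ 2 * exp (2 * t)) = cc t n := by rw [cc]; congr 1; ring
  rw [f, e1, e2, e3]; ring

lemma sum_f (t : ℝ) : Summable (f t) :=
  ((((sum_cc1 t).add (sum_cc2 t)).mul_left (exp (t / 2))).congr fun n => (f_eq t n).symm)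

lemma tsum_f (t : ℝ) : ∑' n : ℤ, f t n = exp (t / 2) * (G1 t + G2 t) := by
  rw [G1, G2, ← Summable.tsum_add (sum_cc1 t) (sum_cc2 t), ← tsum_mul_left]
  exact tsum_congr fun n => f_eq t n

lemma tsum_f_nat (t : ℝ) : ∑' n : ℤ, f t n = 2 * Phi t := by
  have hinj1 : Function.Injective (fun n : ℕ => ((n : ℤ) + 1)) := by
    intro a b h; simpa using h
  have hinj2 : Function.Injective (fun n : ℕ => -((n : ℤ) + 1)) := by
    intro a b h; simpa using h
  have h1 : Summable (fun n : ℕ => f t ((n : ℤ) + 1)) := (sum_f t).comp_injective hinj1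
  have h2 : Summable (fun n : ℕ => f t (-((n : ℤ) + 1))) := (sum_f t).comp_injective hinj2
  rw [tsum_of_add_one_of_neg_add_one h1 h2]
  have hf0 : f t (0 : ℤ) = 0 := by simp [f]
  have hPhi : ∑' n : ℕ, f t ((n : ℤ) + 1) = Phi t := by
    rw [Phi]
    refine tsum_congr fun n => ?_
    simp only [f]; push_cast; ring_nf
  have hneg : ∑' n : ℕ, f t (-((n : ℤ) + 1)) = Phi t := by
    rw [← hPhi]
    refine tsum_congr fun n => ?_
    simp only [f]; push_cast; ring_nf
  rw [hf0, hPhi, hneg]; ring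

end PhiAux

/-- The function `Φ` is even. -/
theorem Phi_even (t : ℝ) : Phi (-t) = Phi t := by
  have key : ∀ s : ℝ, 2 * Phi s = Real.exp (s / 2) * (PhiAux.G1 s + PhiAux.G2 s) := fun s => by
    rw [← PhiAux.tsum_f_nat s, PhiAux.tsum_f s]
  have h1 := PhiAux.E1 t
  have h2 := PhiAux.E2 t
  have e : Real.exp (-t / 2) * Real.exp t = Real.exp (t / 2) := by
    rw [← Real.exp_add]; congr 1; ring
  have main : 2 * Phi (-t) = 2 * Phi t := by
    rw [key (-t), key t, h1, h2]
    calc Real.exp (-t / 2) * (-(Real.exp t * (PhiAux.G0 t + PhiAux.G1 t))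
          + Real.exp t * (PhiAux.G0 t + 2 * PhiAux.G1 t + PhiAux.G2 t))
        = (Real.exp (-t / 2) * Real.exp t) * (PhiAux.G1 t + PhiAux.G2 t) := by ring
      _ = Real.exp (t / 2) * (PhiAux.G1 t + PhiAux.G2 t) := by rw [e]
  linarith
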